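/- Every locally finite group that is ∞-MIF is MIF. -/

import Mathlib

set_option linter.unusedSectionVars false

open List in
/-- Extend an injective list of assignments to a permutation. -/
theorem ext_perm {α : Type*} [DecidableEq α] (ps : List (α × α))
    (h1 : (ps.map Prod.fst).Nodup) (h2 : (ps.map Prod.snd).Nodup) :
    ∃ σ : Equiv.Perm α, (∀ p ∈ ps, σ p.1 = p.2) ∧
      ∀ x, x ∉ ps.map Prod.fst → x ∉ ps.map Prod.snd → σ x = x := by
  induction ps with
  | nil => exact ⟨1, by simp, by simp⟩
  | cons p ps ih =>
    simp only [map_cons, nodup_cons] at h1 h2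
    obtain ⟨σ', hσ'1, hσ'2⟩ := ih h1.2 h2.2
    refine ⟨Equiv.swap (σ' p.1) p.2 * σ', ?_, ?_⟩
    · intro q hq'
      rcases List.mem_cons.mp hq' with rfl | hq
      · simp [Equiv.Perm.mul_apply]
      · have hq1 : q.1 ∈ ps.map Prod.fst := List.mem_map_of_mem hq
        have hq2 : q.2 ∈ ps.map Prod.snd := List.mem_map_of_mem hq
        have e1 : σ' q.1 = q.2 := hσ'1 q hq
        simp only [Equiv.Perm.mul_apply, e1]
        apply Equiv.swap_apply_of_ne_of_ne
        · intro h
          have : q.1 = p.1 := σ'.injective (e1.trans h)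
          exact h1.1 (this ▸ hq1)
        · intro h; exact h2.1 (h ▸ hq2)
    · intro x hx1 hx2
      simp only [mem_cons, not_or, map_cons] at hx1 hx2
      have hfix : σ' x = x := hσ'2 x (by simpa using hx1.2) (by simpa using hx2.2)
      simp only [Equiv.Perm.mul_apply, hfix]
      apply Equiv.swap_apply_of_ne_of_ne
      · intro h
        exact hx1.1 (σ'.injective (hfix.trans h))
      · exact hx2.1

theorem step_pow {α : Type*} (σ : Equiv.Perm α) :
    ∀ (c : List α) (x y : α),
      (∀ p ∈ (x :: (c ++ [y])).dropLast.zip (x :: (c ++ [y])).tail, σ p.1 = p.2) →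
      (σ ^ (c.length + 1)) x = y := by
  intro c
  induction c with
  | nil => intro x y h; simpa using h (x, y) (by simp)
  | cons z c ih =>
    intro x y h
    have hxz : σ x = z := by
      refine h (x, z) ?_
      simp [List.dropLast_cons_of_ne_nil]
    have := ih z y (fun p hp => h p ?_)
    · rw [List.length_cons, pow_succ]
      simp only [Equiv.Perm.mul_apply, hxz]
      exact this
    · simp only [List.cons_append, List.dropLast_cons_of_ne_nil (by simp : (z :: (c ++ [y])) ≠ []),
        List.zip_cons_cons, List.tail_cons]
      exact List.mem_cons_of_mem _ hp


section Defs

variable (A : Type) [Group A] (n : ℕ)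

/-- The family: one finite group and `n` copies of `ℤ`. -/
def Mfam : Option (Fin n) → Type
  | none => A
  | some _ => Multiplicative ℤ

instance MfamGroup : (o : Option (Fin n)) → Group (Mfam A n o)
  | none => ‹Group A›
  | some _ => inferInstanceAs (Group (Multiplicative ℤ))

noncomputable instance MfamDecEq : (o : Option (Fin n)) → DecidableEq (Mfam A n o) :=
  fun _ => Classical.decEq _

/-- Letters. -/
abbrev Lt := (o : Option (Fin n)) × Mfam A n o

/-- The set acted on. -/
abbrev Pt := (ℕ × A) ⊕ (ℕ × ℕ)

/-- Number of `ℤ`-letters. -/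
def lev (T : List (Lt A n)) : ℕ := T.countP (fun y => y.1.isSome)

/-- The trace of the constant letters. -/
def cA : List (Lt A n) → A
  | [] => 1
  | ⟨none, a⟩ :: T => (show A from a) * cA T
  | ⟨some _, _⟩ :: T => 1

/-- Auxiliary chain points. -/
def auxL (ℓ m : ℕ) : List (Pt A) := (List.range (m - 1)).map fun s => Sum.inr (ℓ, s)

/-- Source of a chain. -/
def srcOf (ℓ : ℕ) (c : A) (k : ℤ) : Pt A :=
  if 0 < k then Sum.inl (ℓ, c) else Sum.inl (ℓ + 1, (1 : A))

/-- End of a chain. -/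
def endOf (ℓ : ℕ) (c : A) (k : ℤ) : Pt A :=
  if 0 < k then Sum.inl (ℓ + 1, (1 : A)) else Sum.inl (ℓ, c)

/-- The chain of points that the `i`-th permutation must walk for one `ℤ`-letter. -/
def chainOf (ℓ : ℕ) (c : A) (k : ℤ) : List (Pt A) :=
  srcOf A ℓ c k :: (auxL A ℓ k.natAbs ++ [endOf A ℓ c k])

/-- The chain produced by a suffix, if it starts with an `i`-letter. -/
def conOf (i : Fin n) : List (Lt A n) → Option (List (Pt A))
  | ⟨some j, k⟩ :: T =>
      if j = i then some (chainOf A (lev A n T) (cA A n T) (Multiplicative.toAdd (k : Multiplicative ℤ))) else none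
  | _ => none

/-- All chains for the `i`-th permutation. -/
def conChains (L : List (Lt A n)) (i : Fin n) : List (List (Pt A)) :=
  L.tails.filterMap (conOf A n i)

end Defs

section Lemmas

variable {A : Type} [Group A] {n : ℕ}

theorem lev_cons_none (a : Mfam A n none) (T : List (Lt A n)) :
    lev A n (⟨none, a⟩ :: T) = lev A n T := by
  simp [lev, List.countP_cons]

theorem lev_cons_some (i : Fin n) (k : Mfam A n (some i)) (T : List (Lt A n)) :
    lev A n (⟨some i, k⟩ :: T) = lev A n T + 1 := by
  simp [lev, List.countP_cons]

theorem lev_le_length (T : List (Lt A n)) : lev A n T ≤ T.length :=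
  List.countP_le_length

theorem lev_suffix_le {S T : List (Lt A n)} (h : S <:+ T) : lev A n S ≤ lev A n T :=
  h.sublist.countP_le

theorem lev_append (S T : List (Lt A n)) : lev A n (S ++ T) = lev A n S + lev A n T := by
  simp [lev, List.countP_append]

end Lemmas

section Lemmas2

variable {A : Type} [Group A] {n : ℕ}

theorem cA_cons_none (a : Mfam A n none) (T : List (Lt A n)) :
    cA A n (⟨none, a⟩ :: T) = (show A from a) * cA A n T := rfl

theorem cA_cons_some (i : Fin n) (k : Mfam A n (some i)) (T : List (Lt A n)) :
    cA A n (⟨some i, k⟩ :: T) = 1 := rfl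

theorem mem_auxL {ℓ m : ℕ} {x : Pt A} (h : x ∈ auxL A ℓ m) : ∃ s, x = Sum.inr (ℓ, s) := by
  simp only [auxL, List.mem_map, List.mem_range] at h
  obtain ⟨s, _, rfl⟩ := h
  exact ⟨s, rfl⟩

theorem auxL_nodup (ℓ m : ℕ) : (auxL A ℓ m).Nodup :=
  List.nodup_range.map (fun a b hab => by simpa using hab)

theorem chainOf_dropLast (ℓ : ℕ) (c : A) (k : ℤ) :
    (chainOf A ℓ c k).dropLast = srcOf A ℓ c k :: auxL A ℓ k.natAbs := by
  rw [chainOf, show srcOf A ℓ c k :: (auxL A ℓ k.natAbs ++ [endOf A ℓ c k]) =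
    (srcOf A ℓ c k :: auxL A ℓ k.natAbs) ++ [endOf A ℓ c k] by simp,
    List.dropLast_concat]

theorem chainOf_tail (ℓ : ℕ) (c : A) (k : ℤ) :
    (chainOf A ℓ c k).tail = auxL A ℓ k.natAbs ++ [endOf A ℓ c k] := rfl

theorem srcOf_inl (ℓ : ℕ) (c : A) (k : ℤ) :
    srcOf A ℓ c k = Sum.inl (ℓ, c) ∨ srcOf A ℓ c k = Sum.inl (ℓ + 1, 1) := by
  unfold srcOf; split <;> simp

theorem dropLast_nodup (ℓ : ℕ) (c : A) (k : ℤ) : (chainOf A ℓ c k).dropLast.Nodup := by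
  rw [chainOf_dropLast, List.nodup_cons]
  refine ⟨fun h => ?_, auxL_nodup _ _⟩
  obtain ⟨s, hs⟩ := mem_auxL h
  rcases srcOf_inl (A := A) ℓ c k with h' | h' <;> rw [h'] at hs <;> exact absurd hs (by simp)

theorem tail_nodup (ℓ : ℕ) (c : A) (k : ℤ) : (chainOf A ℓ c k).tail.Nodup := by
  rw [chainOf_tail]
  refine List.Nodup.append (auxL_nodup _ _) (List.nodup_singleton _) ?_
  intro x hx hx'
  obtain ⟨s, rfl⟩ := mem_auxL hx
  simp only [List.mem_singleton] at hx'
  unfold endOf at hx'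
  split at hx' <;> simp at hx'

/-- Totality of the suffix order. -/
theorem suffix_total {β : Type*} {l₁ l₂ L : List β} (h₁ : l₁ <:+ L) (h₂ : l₂ <:+ L) :
    l₁ <:+ l₂ ∨ l₂ <:+ l₁ := by
  rw [← List.reverse_prefix] at h₁ h₂ ⊢
  rw [← List.reverse_prefix (l₁ := l₂)]
  exact List.prefix_or_prefix_of_prefix h₁ h₂

theorem suffix_cons_elim {β : Type*} {l T : List β} {y : β} (h : l <:+ y :: T) :
    l = y :: T ∨ l <:+ T := by
  obtain ⟨u, hu⟩ := h
  cases u with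
  | nil => exact Or.inl (by simpa using hu)
  | cons z u' =>
    right
    rw [List.cons_append] at hu
    exact ⟨u', (List.cons.injEq .. ▸ hu).2⟩

theorem SEL_aux {S₁ S₂ : List (Lt A n)} (h : S₁ <:+ S₂) (hlev : lev A n S₁ = lev A n S₂)
    (hhd : ∀ x ∈ S₂.head?, (Sigma.fst x).isSome = true) : S₁ = S₂ := by
  obtain ⟨X, rfl⟩ := h
  cases X with
  | nil => simp
  | cons x X' =>
    exfalso
    have hx : (Sigma.fst x).isSome = true := hhd x (by simp)
    have : lev A n ((x :: X') ++ S₁) = lev A n (x :: X') + lev A n S₁ := lev_append _ _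
    have hX : lev A n (x :: X') = 0 := by omega
    simp only [lev, List.countP_cons, hx, if_pos] at hX
    omega

/-- Two suffixes starting with a `ℤ`-letter and having the same level are equal. -/
theorem SEL {L S₁ S₂ : List (Lt A n)} (h₁ : S₁ <:+ L) (h₂ : S₂ <:+ L)
    (hlev : lev A n S₁ = lev A n S₂)
    (hd₁ : ∀ x ∈ S₁.head?, (Sigma.fst x).isSome = true)
    (hd₂ : ∀ x ∈ S₂.head?, (Sigma.fst x).isSome = true) : S₁ = S₂ := by
  rcases suffix_total h₁ h₂ with h | h
  · exact SEL_aux h hlev hd₂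
  · exact (SEL_aux h hlev.symm hd₁).symm

end Lemmas2

section Core

variable {A : Type} [Group A] {n : ℕ}

/-- The letters alternate in index. -/
abbrev AltList (L : List (Lt A n)) : Prop := L.Chain' fun l l' => l.1 ≠ l'.1

/-- Key lemma: in the clash configuration, the trace is nontrivial. -/
theorem core_ne {L : List (Lt A n)} (hch : AltList L)
    (hne : ∀ l ∈ L, Sigma.snd l ≠ 1)
    {i : Fin n} {k₁ k₂ : Multiplicative ℤ} {T₁ T₂ : List (Lt A n)}
    (h₁ : (⟨some i, (k₁ : Mfam A n (some i))⟩ :: T₁) <:+ L)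
    (h₂ : (⟨some i, (k₂ : Mfam A n (some i))⟩ :: T₂) <:+ T₁)
    (hlev : lev A n T₁ = lev A n (⟨some i, (k₂ : Mfam A n (some i))⟩ :: T₂)) :
    cA A n T₁ ≠ 1 := by
  intro hc
  have hT₁L : T₁ <:+ L := (List.suffix_cons _ _).trans h₁
  cases T₁ with
  | nil => simpa using h₂.length_le
  | cons y T₁' =>
    obtain ⟨o, v⟩ := y
    cases o with
    | none =>
      -- cA (⟨none, v⟩ :: T₁') = v * cA T₁' = 1
      cases T₁' with
      | nil =>
        -- suffix of a singleton with wrong head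
        rcases suffix_cons_elim h₂ with h | h
        · have := congrArg (fun l => l.head?.map Sigma.fst) h
          simp at this
        · simpa using h.length_le
      | cons z T₁'' =>
        obtain ⟨oz, vz⟩ := z
        cases oz with
        | none =>
          -- two adjacent constant letters: contradiction with alternation
          have : AltList (⟨none, v⟩ :: ⟨none, vz⟩ :: T₁'') := hch.suffix hT₁L
          exact (List.isChain_cons_cons.mp this).1 rfl
        | some jz =>
          rw [cA_cons_none, cA_cons_some] at hc
          rw [mul_one] at hc
          exact hne ⟨none, v⟩ (hT₁L.subset (by simp)) hc
    | some j =>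
      -- T₁ starts with a ℤ-letter: apply SEL, get adjacent equal indices
      have h₂L : (⟨some i, (k₂ : Mfam A n (some i))⟩ :: T₂) <:+ L := h₂.trans hT₁L
      have heq := SEL hT₁L h₂L (by rw [hlev]) (by simp) (by simp)
      have hj : (some j : Option (Fin n)) = some i := by
        have := congrArg (fun l => l.head?.map Sigma.fst) heq
        simpa using this
      have : AltList (⟨some i, (k₁ : Mfam A n (some i))⟩ :: ⟨some j, v⟩ :: T₁') := hch.suffix h₁
      exact (List.isChain_cons_cons.mp this).1 (by simp [hj])

end Core

section Chains

variable {A : Type} [Group A] {n : ℕ}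

theorem mem_conChains {L : List (Lt A n)} {i : Fin n} {k : Multiplicative ℤ}
    {T : List (Lt A n)} (h : (⟨some i, (k : Mfam A n (some i))⟩ :: T) <:+ L) :
    chainOf A (lev A n T) (cA A n T) (Multiplicative.toAdd k) ∈ conChains A n L i := by
  rw [conChains, List.mem_filterMap]
  exact ⟨_, (List.mem_tails _ _).2 h, by simp [conOf]⟩

theorem conChains_elim {L : List (Lt A n)} {i : Fin n} {c : List (Pt A)}
    (h : c ∈ conChains A n L i) :
    ∃ (k : Multiplicative ℤ) (T : List (Lt A n)),
      ((⟨some i, (k : Mfam A n (some i))⟩ :: T) <:+ L) ∧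
      c = chainOf A (lev A n T) (cA A n T) (Multiplicative.toAdd k) := by
  rw [conChains, List.mem_filterMap] at h
  obtain ⟨W, hW, hc⟩ := h
  rw [List.mem_tails] at hW
  rcases W with _ | ⟨⟨o, v⟩, T⟩
  · simp [conOf] at hc
  · cases o with
    | none => simp [conOf] at hc
    | some j =>
      rw [conOf] at hc
      split at hc
      · next hji =>
        subst hji
        exact ⟨v, T, hW, (Option.some.injEq .. ▸ hc).symm⟩
      · simp at hc

/-- The proper-suffix relation on tails. -/
theorem tails_pairwise {β : Type*} (L : List β) :
    L.tails.Pairwise fun W W' => W' <:+ W ∧ W'.length < W.length := by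
  induction L with
  | nil => simp
  | cons y L ih =>
    rw [List.tails_cons]
    refine List.Pairwise.cons (fun W' hW' => ?_) ih
    rw [List.mem_tails] at hW'
    exact ⟨hW'.trans (List.suffix_cons _ _), lt_of_le_of_lt hW'.length_le (by simp)⟩

theorem chain_disjoint {L : List (Lt A n)} (hch : AltList L) (hne : ∀ l ∈ L, Sigma.snd l ≠ 1)
    {i : Fin n} {k₁ k₂ : Multiplicative ℤ} {T₁ T₂ : List (Lt A n)}
    (h₁ : (⟨some i, (k₁ : Mfam A n (some i))⟩ :: T₁) <:+ L)
    (h₂ : (⟨some i, (k₂ : Mfam A n (some i))⟩ :: T₂) <:+ T₁) :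
    List.Disjoint (chainOf A (lev A n T₁) (cA A n T₁) (Multiplicative.toAdd k₁)).dropLast
        (chainOf A (lev A n T₂) (cA A n T₂) (Multiplicative.toAdd k₂)).dropLast ∧
    List.Disjoint (chainOf A (lev A n T₁) (cA A n T₁) (Multiplicative.toAdd k₁)).tail
        (chainOf A (lev A n T₂) (cA A n T₂) (Multiplicative.toAdd k₂)).tail := by
  have hlt : lev A n T₂ + 1 ≤ lev A n T₁ := by
    have := lev_suffix_le h₂; rwa [lev_cons_some i k₂ T₂] at this
  have hcore : lev A n T₁ = lev A n T₂ + 1 → cA A n T₁ ≠ 1 := fun hl =>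
    core_ne hch hne h₁ h₂ (by rw [hl, lev_cons_some i k₂ T₂])
  constructor
  · rw [chainOf_dropLast, chainOf_dropLast]
    intro x hx hx'
    rcases List.mem_cons.mp hx with rfl | hx
    · rcases List.mem_cons.mp hx' with heq | hx'
      · unfold srcOf at heq
        split_ifs at heq <;> rw [Sum.inl.injEq, Prod.mk.injEq] at heq
        · omega
        · exact hcore heq.1 heq.2
        · omega
        · omega
      · obtain ⟨s, hs⟩ := mem_auxL hx'
        unfold srcOf at hs; split_ifs at hs <;> simp at hs
    · obtain ⟨s, rfl⟩ := mem_auxL hx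
      rcases List.mem_cons.mp hx' with heq | hx'
      · unfold srcOf at heq; split_ifs at heq <;> simp at heq
      · obtain ⟨s', hs'⟩ := mem_auxL hx'
        rw [Sum.inr.injEq, Prod.mk.injEq] at hs'
        omega
  · rw [chainOf_tail, chainOf_tail]
    intro x hx hx'
    rcases List.mem_append.mp hx with hx | hx
    · obtain ⟨s, rfl⟩ := mem_auxL hx
      rcases List.mem_append.mp hx' with hx' | hx'
      · obtain ⟨s', hs'⟩ := mem_auxL hx'
        rw [Sum.inr.injEq, Prod.mk.injEq] at hs'
        omega
      · rw [List.mem_singleton] at hx'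
        unfold endOf at hx'; split_ifs at hx' <;> simp at hx'
    · rw [List.mem_singleton] at hx
      subst hx
      rcases List.mem_append.mp hx' with hx' | hx'
      · obtain ⟨s, hs⟩ := mem_auxL hx'
        unfold endOf at hs; split_ifs at hs <;> simp at hs
      · rw [List.mem_singleton] at hx'
        unfold endOf at hx'
        split_ifs at hx' <;> rw [Sum.inl.injEq, Prod.mk.injEq] at hx'
        · omega
        · omega
        · exact hcore hx'.1 hx'.2
        · omega

theorem conChains_pairwise {L : List (Lt A n)} (hch : AltList L)
    (hne : ∀ l ∈ L, Sigma.snd l ≠ 1) (i : Fin n) :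
    (conChains A n L i).Pairwise fun c₁ c₂ =>
      (List.Disjoint c₁.dropLast c₂.dropLast) ∧ (List.Disjoint c₁.tail c₂.tail) := by
  have hp : L.tails.Pairwise fun W W' => (W' <:+ W ∧ W'.length < W.length) ∧ W <:+ L := by
    refine (tails_pairwise L).imp_of_mem ?_
    intro W W' hW _ h
    exact ⟨h, (List.mem_tails _ _).1 hW⟩
  refine List.Pairwise.filterMap _ ?_ hp
  rintro W₁ W₂ ⟨⟨hsuf, hlen⟩, hWL⟩ c₁ hc₁ c₂ hc₂
  rcases W₁ with _ | ⟨⟨o₁, k₁⟩, T₁⟩; · simp [conOf] at hc₁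
  rcases o₁ with _ | j₁; · simp [conOf] at hc₁
  rcases W₂ with _ | ⟨⟨o₂, k₂⟩, T₂⟩; · simp [conOf] at hc₂
  rcases o₂ with _ | j₂; · simp [conOf] at hc₂
  rw [conOf] at hc₁ hc₂
  split at hc₁ <;> rename_i hj₁ <;> [skip; simp at hc₁]
  split at hc₂ <;> rename_i hj₂ <;> [skip; simp at hc₂]
  subst hj₁; subst hj₂
  simp only [Option.mem_def, Option.some.injEq] at hc₁ hc₂
  subst hc₁; subst hc₂
  have hsuf' : (⟨some j₂, (k₂ : Mfam A n (some j₂))⟩ :: T₂) <:+ T₁ := by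
    rcases suffix_cons_elim hsuf with h | h
    · exact absurd (congrArg List.length h) (by simp at hlen ⊢; omega)
    · exact h
  exact chain_disjoint hch hne hWL hsuf'

end Chains

section Sigma

variable {A : Type} [Group A] {n : ℕ}

/-- All assignment pairs for the `i`-th permutation. -/
def pairsOf (L : List (Lt A n)) (i : Fin n) : List (Pt A × Pt A) :=
  (conChains A n L i).flatMap fun c => c.dropLast.zip c.tail

theorem pairsOf_fst (L : List (Lt A n)) (i : Fin n) :
    (pairsOf L i).map Prod.fst = (conChains A n L i).flatMap fun c => c.dropLast := by
  rw [pairsOf, List.map_flatMap]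
  congr 1
  funext c
  exact List.map_fst_zip (by simp)

theorem pairsOf_snd (L : List (Lt A n)) (i : Fin n) :
    (pairsOf L i).map Prod.snd = (conChains A n L i).flatMap fun c => c.tail := by
  rw [pairsOf, List.map_flatMap]
  congr 1
  funext c
  exact List.map_snd_zip (by simp)

theorem exists_sigma {L : List (Lt A n)} (hch : AltList L)
    (hne : ∀ l ∈ L, Sigma.snd l ≠ 1) (i : Fin n) :
    ∃ σ : Equiv.Perm (Pt A), (∀ p ∈ pairsOf L i, σ p.1 = p.2) ∧
      ∀ x, (∀ c ∈ conChains A n L i, x ∉ c) → σ x = x := by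
  classical
  have h1 : ((pairsOf L i).map Prod.fst).Nodup := by
    rw [pairsOf_fst, List.nodup_flatMap]
    refine ⟨fun c hc => ?_, ?_⟩
    · obtain ⟨k, T, _, rfl⟩ := conChains_elim hc
      exact dropLast_nodup _ _ _
    · exact (conChains_pairwise hch hne i).imp fun h => h.1
  have h2 : ((pairsOf L i).map Prod.snd).Nodup := by
    rw [pairsOf_snd, List.nodup_flatMap]
    refine ⟨fun c hc => ?_, ?_⟩
    · obtain ⟨k, T, _, rfl⟩ := conChains_elim hc
      exact tail_nodup _ _ _
    · exact (conChains_pairwise hch hne i).imp fun h => h.2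
  obtain ⟨σ, hs1, hs2⟩ := ext_perm _ h1 h2
  refine ⟨σ, hs1, fun x hx => hs2 x ?_ ?_⟩
  · rw [pairsOf_fst]
    intro hmem
    obtain ⟨c, hc, hm⟩ := List.mem_flatMap.1 hmem
    exact hx c hc ((List.dropLast_sublist c).subset hm)
  · rw [pairsOf_snd]
    intro hmem
    obtain ⟨c, hc, hm⟩ := List.mem_flatMap.1 hmem
    exact hx c hc ((List.tail_sublist c).subset hm)

theorem sigma_step {L : List (Lt A n)} {σ : Equiv.Perm (Pt A)} {i : Fin n}
    (hσ : ∀ p ∈ pairsOf L i, σ p.1 = p.2)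
    {k : Multiplicative ℤ} {T : List (Lt A n)} (hk : Multiplicative.toAdd k ≠ 0)
    (h : (⟨some i, (k : Mfam A n (some i))⟩ :: T) <:+ L) :
    (σ ^ (Multiplicative.toAdd k)) (Sum.inl (lev A n T, cA A n T) : Pt A) =
      Sum.inl (lev A n T + 1, 1) := by
  set K := Multiplicative.toAdd k with hK
  set ℓ := lev A n T
  set c := cA A n T
  have hchain : chainOf A ℓ c K ∈ conChains A n L i := mem_conChains h
  have hpairs : ∀ p ∈ (chainOf A ℓ c K).dropLast.zip (chainOf A ℓ c K).tail, σ p.1 = p.2 :=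
    fun p hp => hσ p (List.mem_flatMap.2 ⟨_, hchain, hp⟩)
  have hstep := step_pow σ (auxL A ℓ K.natAbs) (srcOf A ℓ c K) (endOf A ℓ c K) hpairs
  have habs : 1 ≤ K.natAbs := Int.natAbs_pos.mpr hk
  have hlen : (auxL A ℓ K.natAbs).length + 1 = K.natAbs := by
    simp only [auxL, List.length_map, List.length_range]
    omega
  rw [hlen] at hstep
  rcases lt_or_ge 0 K with hKp | hKn
  · rw [srcOf, if_pos hKp, endOf, if_pos hKp] at hstep
    rw [show K = (K.natAbs : ℤ) by omega, zpow_natCast]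
    exact hstep
  · have hKneg : K < 0 := lt_of_le_of_ne hKn hk
    rw [srcOf, if_neg (by omega), endOf, if_neg (by omega)] at hstep
    rw [show K = -(K.natAbs : ℤ) by omega, zpow_neg, zpow_natCast]
    rw [Equiv.Perm.inv_def, Equiv.symm_apply_eq]
    exact hstep.symm

end Sigma

section Rep

variable (A : Type) [Group A]

/-- Truncated left-multiplication action of `A` on the levels. -/
def aPerm (Mx : ℕ) (a : A) : Equiv.Perm (Pt A) where
  toFun x := match x with
    | Sum.inl (j, b) => if j ≤ Mx then Sum.inl (j, a * b) else Sum.inl (j, b)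
    | Sum.inr y => Sum.inr y
  invFun x := match x with
    | Sum.inl (j, b) => if j ≤ Mx then Sum.inl (j, a⁻¹ * b) else Sum.inl (j, b)
    | Sum.inr y => Sum.inr y
  left_inv := by
    rintro (⟨j, b⟩ | y)
    · by_cases h : j ≤ Mx <;> simp [h]
    · rfl
  right_inv := by
    rintro (⟨j, b⟩ | y)
    · by_cases h : j ≤ Mx <;> simp [h]
    · rfl

theorem aPerm_apply_inl (Mx : ℕ) (a : A) {j : ℕ} (b : A) (h : j ≤ Mx) :
    aPerm A Mx a (Sum.inl (j, b)) = Sum.inl (j, a * b) := by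
  simp [aPerm, h]

/-- The action as a homomorphism. -/
def aHom (Mx : ℕ) : A →* Equiv.Perm (Pt A) where
  toFun := aPerm A Mx
  map_one' := by
    ext x
    rcases x with ⟨j, b⟩ | y
    · by_cases h : j ≤ Mx <;> simp [aPerm, h]
    · rfl
  map_mul' a b := by
    ext x
    rcases x with ⟨j, c⟩ | y
    · by_cases h : j ≤ Mx <;> simp [aPerm, h, mul_assoc]
    · rfl

/-- The subgroup of permutations fixing everything outside `T`. -/
def fixSubgroup {β : Type} (T : Set β) : Subgroup (Equiv.Perm β) where
  carrier := {σ | ∀ x ∉ T, σ x = x}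
  one_mem' := fun _ _ => rfl
  mul_mem' := by
    intro σ τ hσ hτ x hx
    simp only [Equiv.Perm.mul_apply, hτ x hx, hσ x hx]
  inv_mem' := by
    intro σ hσ x hx
    exact σ.injective (by rw [← Equiv.Perm.mul_apply, mul_inv_cancel, Equiv.Perm.one_apply, hσ x hx])

theorem fixSubgroup_finite {β : Type} {T : Set β} (hT : T.Finite) :
    Finite (fixSubgroup T) := by
  classical
  have hmapsto : ∀ σ : fixSubgroup T, ∀ x : T, (σ : Equiv.Perm β) x ∈ T := by
    intro σ x
    by_contra hx
    have h1 : (σ : Equiv.Perm β) ((σ : Equiv.Perm β) x) = (σ : Equiv.Perm β) x := σ.2 _ hx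
    have h2 : (σ : Equiv.Perm β) x = x := (σ : Equiv.Perm β).injective h1
    exact hx (by rw [h2]; exact x.2)
  haveI : Finite T := hT.to_subtype
  refine Finite.of_injective (fun σ : fixSubgroup T => fun x : T => (⟨_, hmapsto σ x⟩ : T)) ?_
  intro σ τ h
  ext x
  by_cases hx : x ∈ T
  · exact congrArg Subtype.val (congrFun h ⟨x, hx⟩)
  · rw [σ.2 x hx, τ.2 x hx]

end Rep

section Assemble

open Monoid

theorem coprodI_rf (A : Type) [Group A] [Finite A] (n : ℕ)
    (g : Monoid.CoprodI (Mfam A n)) (hg : g ≠ 1) :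
    ∃ (Γ : Type) (_ : Group Γ), Finite Γ ∧
      ∃ ρ : Monoid.CoprodI (Mfam A n) →* Γ, ρ g ≠ 1 := by
  classical
  set w := Monoid.CoprodI.Word.equiv (M := Mfam A n) g with hw
  set L := w.toList with hLdef
  have hch : AltList L := w.chain_ne
  have hne : ∀ l ∈ L, Sigma.snd l ≠ 1 := w.ne_one
  have hprod : g = (L.map fun l => Monoid.CoprodI.of l.snd).prod :=
    (Monoid.CoprodI.Word.equiv.symm_apply_apply g).symm
  set Mx := L.length with hMx
  choose σ hσ1 hσ2 using fun i : Fin n => exists_sigma hch hne i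
  set Tset : Set (Pt A) :=
    {x | ∃ j b, x = Sum.inl (j, b) ∧ j ≤ Mx} ∪
      ⋃ i : Fin n, {x | ∃ c ∈ conChains A n L i, x ∈ c} with hTset
  have hTfin : Tset.Finite := by
    refine Set.Finite.union ?_ ?_
    · have : {x : Pt A | ∃ j b, x = Sum.inl (j, b) ∧ j ≤ Mx} ⊆
          (fun p : ℕ × A => (Sum.inl p : Pt A)) '' (Set.Iic Mx ×ˢ Set.univ) := by
        rintro x ⟨j, b, rfl, hj⟩
        exact ⟨(j, b), ⟨hj, trivial⟩, rfl⟩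
      exact Set.Finite.subset (((Set.finite_Iic Mx).prod Set.finite_univ).image _) this
    · refine Set.finite_iUnion fun i => ?_
      refine Set.Finite.subset ((conChains A n L i).flatten.finite_toSet) ?_
      rintro x ⟨c, hc, hm⟩
      exact List.mem_flatten.2 ⟨c, hc, hm⟩
  have hσmem : ∀ i, σ i ∈ fixSubgroup Tset := by
    intro i x hx
    refine hσ2 i x fun c hc hm => hx ?_
    exact Or.inr (Set.mem_iUnion.2 ⟨i, c, hc, hm⟩)
  have haMem : ∀ a : A, aPerm A Mx a ∈ fixSubgroup Tset := by
    intro a x hx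
    rcases x with ⟨j, b⟩ | y
    · have hj : ¬ j ≤ Mx := fun h => hx (Or.inl ⟨j, b, rfl, h⟩)
      simp [aPerm, hj]
    · rfl
  let η : (o : Option (Fin n)) → Mfam A n o →* fixSubgroup Tset := fun o =>
    match o with
    | none => (aHom A Mx).codRestrict _ haMem
    | some i => zpowersHom _ (⟨σ i, hσmem i⟩ : fixSubgroup Tset)
  let ρ0 : Monoid.CoprodI (Mfam A n) →* fixSubgroup Tset := Monoid.CoprodI.lift η
  have trace : ∀ W : List (Lt A n), W <:+ L →
      (((fixSubgroup Tset).subtype.comp ρ0) ((W.map fun l => Monoid.CoprodI.of l.snd).prod))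
        (Sum.inl (0, 1) : Pt A) = Sum.inl (lev A n W, cA A n W) := by
    intro W
    induction W with
    | nil => simp [lev, cA]
    | cons y T ih =>
      intro hsuf
      have hT : T <:+ L := (List.suffix_cons y T).trans hsuf
      have hlevle : lev A n T ≤ Mx := le_trans (lev_le_length T) hT.length_le
      rw [List.map_cons, List.prod_cons, map_mul]
      rw [Equiv.Perm.mul_apply, ih hT]
      obtain ⟨o, v⟩ := y
      cases o with
      | none =>
        have : ((fixSubgroup Tset).subtype.comp ρ0) (Monoid.CoprodI.of v) = aPerm A Mx v := by
          simp only [MonoidHom.comp_apply, ρ0, Monoid.CoprodI.lift_of]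
          rfl
        rw [this, aPerm_apply_inl A Mx v _ hlevle, lev_cons_none, cA_cons_none]
      | some i =>
        have hv1 : v ≠ 1 := hne ⟨some i, v⟩ (hsuf.subset (by simp))
        have hkne : Multiplicative.toAdd (show Multiplicative ℤ from v) ≠ 0 := by
          intro h
          exact hv1 (by
            have := congrArg Multiplicative.ofAdd h
            exact this)
        have : ((fixSubgroup Tset).subtype.comp ρ0) (Monoid.CoprodI.of v) =
            σ i ^ (Multiplicative.toAdd (show Multiplicative ℤ from v)) := by
          simp only [MonoidHom.comp_apply, ρ0, Monoid.CoprodI.lift_of]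
          have : η (some i) v = (⟨σ i, hσmem i⟩ : fixSubgroup Tset) ^
              (Multiplicative.toAdd (show Multiplicative ℤ from v)) := rfl
          rw [this]
          push_cast [SubgroupClass.coe_zpow]
          rfl
        rw [this, sigma_step (hσ1 i) hkne hsuf, lev_cons_some, cA_cons_some]
  have hbase : (lev A n L, cA A n L) ≠ ((0 : ℕ), (1 : A)) := by
    intro hLzero
    have hL0 : lev A n L = 0 := congrArg Prod.fst hLzero
    have hL1 : cA A n L = 1 := congrArg Prod.snd hLzero
    have hLne : L ≠ [] := by
      intro h
      apply hg
      rw [hprod, h]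
      simp
    rcases L with _ | ⟨⟨o, v⟩, T⟩
    · exact hLne rfl
    · cases o with
      | some i => rw [lev_cons_some] at hL0; omega
      | none =>
        rcases T with _ | ⟨⟨oz, vz⟩, T'⟩
        · rw [cA_cons_none] at hL1
          simp only [cA, mul_one] at hL1
          exact hne ⟨none, v⟩ (by simp) ((mul_one (v : A)).symm.trans hL1)
        · cases oz with
          | none => exact (List.isChain_cons_cons.mp hch).1 rfl
          | some j =>
            rw [lev_cons_none, lev_cons_some] at hL0; omega
  refine ⟨fixSubgroup Tset, inferInstance, fixSubgroup_finite hTfin, ρ0, ?_⟩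
  intro hρ
  have h1 := trace L List.suffix_rfl
  rw [← hprod] at h1
  simp only [MonoidHom.comp_apply] at h1
  rw [hρ] at h1
  simp only [map_one, Equiv.Perm.coe_one, id_eq] at h1
  exact hbase (Sum.inl_injective h1.symm)

end Assemble

section CoprodRF

open Monoid

theorem coprod_rf (A : Type) [Group A] [Finite A] (n : ℕ)
    (u : Monoid.Coprod A (FreeGroup (Fin n))) (hu : u ≠ 1) :
    ∃ (Γ : Type) (_ : Group Γ), Finite Γ ∧
      ∃ φ : Monoid.Coprod A (FreeGroup (Fin n)) →* Γ, φ u ≠ 1 := by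
  let Φ : Monoid.Coprod A (FreeGroup (Fin n)) →* Monoid.CoprodI (Mfam A n) :=
    Monoid.Coprod.lift (Monoid.CoprodI.of (M := Mfam A n) (i := none))
      (FreeGroup.lift fun i => Monoid.CoprodI.of (M := Mfam A n)
        (show Mfam A n (some i) from Multiplicative.ofAdd (1 : ℤ)))
  let Ψ : Monoid.CoprodI (Mfam A n) →* Monoid.Coprod A (FreeGroup (Fin n)) :=
    Monoid.CoprodI.lift fun o =>
      match o with
      | none => Monoid.Coprod.inl
      | some i => zpowersHom _ (Monoid.Coprod.inr (FreeGroup.of i))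
  have hΨΦ : Ψ.comp Φ = MonoidHom.id _ := by
    apply Monoid.Coprod.hom_ext
    · ext a
      simp only [MonoidHom.comp_apply, Monoid.Coprod.lift_apply_inl, MonoidHom.id_apply, Φ, Ψ]
      exact Monoid.CoprodI.lift_of (M := Mfam A n) (i := none) _ _
    · ext i
      simp only [MonoidHom.comp_apply, MonoidHom.id_apply, Monoid.Coprod.lift_apply_inr, Φ, Ψ,
        FreeGroup.lift_apply_of, Monoid.CoprodI.lift_of]
      show (Monoid.Coprod.inr (FreeGroup.of i) : Monoid.Coprod A (FreeGroup (Fin n))) ^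
        Multiplicative.toAdd (Multiplicative.ofAdd (1 : ℤ)) = Monoid.Coprod.inr (FreeGroup.of i)
      simp
  have hΦu : Φ u ≠ 1 := by
    intro hz
    apply hu
    have := congrArg Ψ hz
    rwa [← MonoidHom.comp_apply, hΨΦ, MonoidHom.id_apply, map_one] at this
  obtain ⟨Γ, instΓ, hfin, ρ, hρ⟩ := coprodI_rf A n (Φ u) hΦu
  exact ⟨Γ, instΓ, hfin, ρ.comp Φ, hρ⟩

end CoprodRF



/-- Words in the free product `G * Fₙ` of `G` with the free group on `n` generators. -/
abbrev MixedWord (G : Type*) [Group G] (n : ℕ) :=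
  Monoid.Coprod G (FreeGroup (Fin n))

/-- Evaluation of a mixed word, mapping the constants through `f` and substituting
`h i` for the `i`-th variable. -/
def MixedWord.evalHom {G H : Type*} [Group G] [Group H] {n : ℕ}
    (f : G →* H) (h : Fin n → H) (w : MixedWord G n) : H :=
  Monoid.Coprod.lift f (FreeGroup.lift h) w

/-- Evaluation of a mixed word over `G` at `h : Fin n → G`. -/
def MixedWord.eval {G : Type*} [Group G] {n : ℕ} (h : Fin n → G)
    (w : MixedWord G n) : G :=
  w.evalHom (MonoidHom.id G) h

/-- A word `w ∈ G * Fₙ` is nontrivial if it does not lie in (the canonical copy of) `G`. -/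
def MixedWord.IsNontrivial {G : Type*} [Group G] {n : ℕ} (w : MixedWord G n) : Prop :=
  w ∉ (Monoid.Coprod.inl : G →* MixedWord G n).range

/-- `G` is mixed identity free: no nontrivial word in `G * Fₙ` vanishes identically. -/
def MIF (G : Type*) [Group G] : Prop :=
  ∀ (n : ℕ) (w : MixedWord G n), w.IsNontrivial → ∃ h : Fin n → G, w.eval h ≠ 1

/-- A group is locally finite if every finitely generated subgroup is finite. -/
def LocallyFiniteGrp (G : Type*) [Group G] : Prop :=
  ∀ s : Set G, s.Finite → (Subgroup.closure s : Set G).Finite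

/-- `G` is ∞-MIF: for any finite subgroup `G₁` of `G` (containing the constants) and
any infinite sequence of nontrivial words in `G₁ * Fₙ`, if some finite overgroup `Γ`
of `G₁` contains a substitution making all the words nontrivial, then so does `G`. -/
def InftyMIF (G : Type*) [Group G] : Prop :=
  ∀ (G₁ : Subgroup G), Finite G₁ →
    ∀ (n : ℕ) (w : ℕ → MixedWord G₁ n), (∀ i, (w i).IsNontrivial) →
    (∃ (Γ : Type) (_ : Group Γ), Finite Γ ∧
      ∃ f : G₁ →* Γ, Function.Injective f ∧
        ∃ γ : Fin n → Γ, ∀ i, (w i).evalHom f γ ≠ 1) →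
    ∃ h : Fin n → G, ∀ i, (w i).evalHom G₁.subtype h ≠ 1

/-- Every locally finite ∞-MIF group is MIF. -/
theorem stmt_9 (G : Type) [Group G] (hlf : LocallyFiniteGrp G) (h : InftyMIF G) :
    MIF G := by
  intro n w hw
  -- Step 1: realize `w` as the image of a word over a finite subgroup
  have key : ∃ (G₁ : Subgroup G) (_ : Finite G₁) (w₁ : MixedWord G₁ n),
      Monoid.Coprod.map G₁.subtype (MonoidHom.id _) w₁ = w := by
    clear hw
    induction w using Monoid.Coprod.induction_on with
    | inl g =>
      have hfin : Finite (Subgroup.closure {g}) :=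
        (hlf {g} (Set.finite_singleton g)).to_subtype
      exact ⟨Subgroup.closure {g}, hfin,
        Monoid.Coprod.inl ⟨g, Subgroup.subset_closure rfl⟩, rfl⟩
    | inr b =>
      exact ⟨⊥, inferInstance, Monoid.Coprod.inr b, rfl⟩
    | mul x y hx hy =>
      obtain ⟨G₁, hG₁, w₁, rfl⟩ := hx
      obtain ⟨G₂, hG₂, w₂, rfl⟩ := hy
      have hfinset : ((G₁ : Set G) ∪ (G₂ : Set G)).Finite :=
        Set.Finite.union (G₁ : Set G).toFinite (G₂ : Set G).toFinite
      have hfin : Finite (G₁ ⊔ G₂ : Subgroup G) := by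
        have := (hlf _ hfinset).to_subtype
        rwa [Subgroup.closure_union, Subgroup.closure_eq, Subgroup.closure_eq] at this
      refine ⟨G₁ ⊔ G₂, hfin,
        Monoid.Coprod.map (Subgroup.inclusion le_sup_left) (MonoidHom.id _) w₁ *
        Monoid.Coprod.map (Subgroup.inclusion le_sup_right) (MonoidHom.id _) w₂, ?_⟩
      rw [map_mul]
      rw [Monoid.Coprod.map_map, Monoid.Coprod.map_map]
      congr 1 <;>
        rw [MonoidHom.id_comp, Subgroup.subtype_comp_inclusion]
  obtain ⟨G₁, hG₁fin, w₁, hmap⟩ := key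
  -- Step 2: the small word is nontrivial
  have hwnt : w₁.IsNontrivial := by
    rintro ⟨a, ha⟩
    exact hw ⟨(a : G), by rw [← hmap, ← ha, Monoid.Coprod.map_apply_inl]; rfl⟩
  have hw₁ne : w₁ ≠ 1 := by
    intro h1
    exact hwnt ⟨1, by rw [h1, map_one]⟩
  -- Step 3: residual finiteness gives the finite overgroup certificate
  obtain ⟨Γ', instΓ', hΓ'fin, φ, hφ⟩ := coprod_rf G₁ n w₁ hw₁ne
  have happ := h G₁ hG₁fin n (fun _ => w₁) (fun _ => hwnt) ?cert
  case cert =>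
    refine ⟨Γ' × G₁, inferInstance, inferInstance,
      (φ.comp Monoid.Coprod.inl).prod (MonoidHom.id G₁), ?_, ?_⟩
    · intro a b hab
      exact congrArg Prod.snd hab
    · refine ⟨fun i => (φ (Monoid.Coprod.inr (FreeGroup.of i)), 1), fun _ => ?_⟩
      set f := (φ.comp Monoid.Coprod.inl).prod (MonoidHom.id G₁)
      set γ : Fin n → Γ' × G₁ := fun i => (φ (Monoid.Coprod.inr (FreeGroup.of i)), 1)
      have hfst : (MonoidHom.fst Γ' G₁).comp
          (Monoid.Coprod.lift f (FreeGroup.lift γ)) = φ := by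
        apply Monoid.Coprod.hom_ext
        · ext a
          simp [f, Monoid.Coprod.lift_apply_inl]
        · ext i
          simp [γ, Monoid.Coprod.lift_apply_inr]
      intro hone
      apply hφ
      have := congrArg (MonoidHom.fst Γ' G₁) hone
      rw [map_one] at this
      rw [← this]
      rw [← hfst]
      rfl
  -- Step 4: transport the witness back to `w`
  obtain ⟨h', hh'⟩ := happ
  refine ⟨h', ?_⟩
  have hE : (Monoid.Coprod.lift (MonoidHom.id G) (FreeGroup.lift h')).comp
      (Monoid.Coprod.map G₁.subtype (MonoidHom.id _)) =
      Monoid.Coprod.lift G₁.subtype (FreeGroup.lift h') := by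
    apply Monoid.Coprod.hom_ext
    · ext a
      simp [Monoid.Coprod.lift_apply_inl, Monoid.Coprod.map_apply_inl]
    · ext i
      simp [Monoid.Coprod.lift_apply_inr, Monoid.Coprod.map_apply_inr]
  have : w.eval h' = w₁.evalHom G₁.subtype h' := by
    rw [MixedWord.eval, MixedWord.evalHom, ← hmap, MixedWord.evalHom,
      ← MonoidHom.comp_apply, hE]
  rw [this]
  exact hh' 0
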